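/- Let R be a finite local ring of odd characteristic with maximal ideal M, and let β be the bilinear form on R² defined by β((x₁,x₂),(y₁,y₂)) = x₁y₁ − x₂y₂. Then every unimodular orthogonal set in R² with respect to β has at most |R| − |M| elements. -/

import Mathlib

open IsLocalRing

section Aux

variable {R : Type*} [CommRing R] [IsLocalRing R] [Fintype R]

lemma stmt6_unit_cancel {a t : R} (h : IsUnit a) (h0 : a * t = 0) : t = 0 := by
  obtain ⟨c, hc⟩ := h.exists_left_inv
  calc t = c * a * t := by rw [hc, one_mul]
  _ = c * (a * t) := by ring
  _ = 0 := by rw [h0, mul_zero]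

lemma stmt6_units_ncard :
    {x : R | IsUnit x}.ncard = Fintype.card R - Nat.card (maximalIdeal R) := by
  have h : {x : R | IsUnit x} = ((maximalIdeal R : Set R))ᶜ := by
    ext x
    simp [IsLocalRing.mem_maximalIdeal, mem_nonunits_iff]
  have hc : Nat.card (maximalIdeal R) = (maximalIdeal R : Set R).ncard := by
    rw [← Nat.card_coe_set_eq]
    rfl
  have hp := Set.ncard_add_ncard_compl (maximalIdeal R : Set R)
  have hn : Nat.card R = Fintype.card R := Nat.card_eq_fintype_card
  rw [h, hc]
  omega

lemma stmt6_helper (h2 : IsUnit (2 : R)) (S : Set (R × R)) (f g : R × R → R)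
    (hsep : ∀ x y : R × R, f x = f y → g x = g y → x = y)
    (horth : ∀ x ∈ S, ∀ y ∈ S, x ≠ y → f x * g y + g x * f y = 0)
    (hallf : ∀ x ∈ S, IsUnit (f x))
    (h3 : ¬ S.ncard ≤ 2) :
    S.ncard ≤ {x : R | IsUnit x}.ncard := by
  have hinj : Set.InjOn f S := by
    intro x hx y hy hfxy
    by_contra hne
    have e1 := horth x hx y hy hne
    have hgy : g y = - g x := by
      have h0 : f x * (g y + g x) = 0 := by linear_combination e1 + g x * hfxy
      have := stmt6_unit_cancel (hallf x hx) h0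
      linear_combination this
    -- get a third element
    have hz : (S \ {x, y}).Nonempty := by
      rw [Set.nonempty_iff_ne_empty]
      intro hemp
      have hsub : S ⊆ {x, y} := by
        intro a ha
        by_contra hna
        exact (Set.eq_empty_iff_forall_notMem.mp hemp a) ⟨ha, hna⟩
      have := Set.ncard_le_ncard hsub (Set.toFinite _)
      have h2' : ({x, y} : Set (R × R)).ncard ≤ 2 := by
        apply le_trans (Set.ncard_insert_le _ _)
        simp
      omega
    obtain ⟨z, hzS, hzne⟩ := hz
    simp only [Set.mem_insert_iff, Set.mem_singleton_iff, not_or] at hzne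
    have e2 := horth x hx z hzS (fun h => hzne.1 h.symm)
    have e3 := horth y hy z hzS (fun h => hzne.2 h.symm)
    have key : 2 * (g x * f z) = 0 := by
      linear_combination e2 - e3 - g z * hfxy + f z * hgy
    have h1 : g x * f z = 0 := stmt6_unit_cancel h2 key
    have hgx : g x = 0 := stmt6_unit_cancel (hallf z hzS) (by linear_combination h1)
    exact hne (hsep x y hfxy (by rw [hgx, hgy, hgx, neg_zero]))
  calc S.ncard = (f '' S).ncard := (Set.ncard_image_of_injOn hinj).symm
  _ ≤ {x : R | IsUnit x}.ncard := by
      apply Set.ncard_le_ncard _ (Set.toFinite _)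
      rintro _ ⟨v, hv, rfl⟩
      exact hallf v hv

end Aux

/-- For a finite local ring `R` of odd characteristic with maximal ideal `M`
and the bilinear form `β((x₁,x₂),(y₁,y₂)) = x₁y₁ - x₂y₂`, every unimodular orthogonal set
in `R²` has at most `|R| - |M|` elements. -/
theorem stmt_6 (R : Type*) [CommRing R] [IsLocalRing R] [Fintype R]
    (hchar : Odd (ringChar R))
    (S : Set (R × R))
    (huni : ∀ v ∈ S, Ideal.span {v.1, v.2} = (⊤ : Ideal R))
    (horth : ∀ x ∈ S, ∀ y ∈ S, x ≠ y → x.1 * y.1 - x.2 * y.2 = 0) :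
    S.ncard ≤ Fintype.card R - Nat.card (IsLocalRing.maximalIdeal R) := by
  -- 2 is a unit
  have h2 : IsUnit (2 : R) := by
    obtain ⟨k, hk⟩ := hchar
    have hc : ((ringChar R : ℕ) : R) = 0 := CharP.cast_eq_zero R (ringChar R)
    refine IsUnit.of_mul_eq_one (a := (2 : R)) ((k : R) + 1) ?_
    have : ((2 * k + 1 : ℕ) : R) = 0 := by rw [← hk]; exact_mod_cast hc
    push_cast at this
    linear_combination this
  have h20 : (2 : R) ≠ 0 := fun h => not_isUnit_zero (h ▸ h2)
  rw [← stmt6_units_ncard]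
  by_cases hle : S.ncard ≤ 2
  · -- units set has at least two elements: 1 and -1
    have hsub : ({1, -1} : Set R) ⊆ {x : R | IsUnit x} := by
      rintro x (rfl | rfl)
      · exact isUnit_one
      · exact isUnit_one.neg
    have hne : (1 : R) ≠ -1 := fun h => h20 (by linear_combination h)
    have := Set.ncard_le_ncard hsub (Set.toFinite _)
    rw [Set.ncard_pair hne] at this
    omega
  -- set up the transformed coordinates
  set f : R × R → R := fun v => v.1 + v.2 with hf
  set g : R × R → R := fun v => v.1 - v.2 with hg
  have hsep : ∀ x y : R × R, f x = f y → g x = g y → x = y := by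
    intro x y h1 h2'
    simp only [hf, hg] at h1 h2'
    have e1 : (2 : R) * x.1 = 2 * y.1 := by linear_combination h1 + h2'
    have e2 : (2 : R) * x.2 = 2 * y.2 := by linear_combination h1 - h2'
    have c1 : x.1 = y.1 := by
      have := stmt6_unit_cancel h2 (t := x.1 - y.1) (by linear_combination e1)
      linear_combination this
    have c2 : x.2 = y.2 := by
      have := stmt6_unit_cancel h2 (t := x.2 - y.2) (by linear_combination e2)
      linear_combination this
    exact Prod.ext c1 c2
  have horth' : ∀ x ∈ S, ∀ y ∈ S, x ≠ y → f x * g y + g x * f y = 0 := by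
    intro x hx y hy hne
    have := horth x hx y hy hne
    simp only [hf, hg]
    linear_combination 2 * this
  have huw : ∀ v ∈ S, IsUnit (f v) ∨ IsUnit (g v) := by
    intro v hv
    by_contra hcon
    push_neg at hcon
    have hfv : f v ∈ nonunits R := hcon.1
    have hgv : g v ∈ nonunits R := hcon.2
    have h1 : ¬ IsUnit v.1 := by
      intro hu
      obtain ⟨c, hc⟩ := h2.exists_left_inv
      have : v.1 = c * (f v + g v) := by
        simp only [hf, hg]; linear_combination (v.1 : R) * hc.symm
      have hnu : f v + g v ∈ nonunits R := IsLocalRing.nonunits_add hfv hgv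
      exact hnu (isUnit_of_mul_isUnit_right (this ▸ hu))
    have h1' : ¬ IsUnit v.2 := by
      intro hu
      obtain ⟨c, hc⟩ := h2.exists_left_inv
      have : v.2 = c * (f v + (- g v)) := by
        simp only [hf, hg]; linear_combination (v.2 : R) * hc.symm
      have hnu : f v + (- g v) ∈ nonunits R :=
        IsLocalRing.nonunits_add hfv (fun h => hgv (by simpa using h.neg))
      exact hnu (isUnit_of_mul_isUnit_right (this ▸ hu))
    have hone : (1 : R) ∈ Ideal.span {v.1, v.2} := by rw [huni v hv]; trivial
    obtain ⟨a, b, hab⟩ := Ideal.mem_span_pair.mp hone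
    have hnu : a * v.1 + b * v.2 ∈ nonunits R :=
      IsLocalRing.nonunits_add (fun h => h1 (isUnit_of_mul_isUnit_right h))
        (fun h => h1' (isUnit_of_mul_isUnit_right h))
    rw [hab] at hnu
    exact hnu isUnit_one
  -- Case A: some element has both coordinates units
  by_cases hA : ∃ x₀ ∈ S, IsUnit (f x₀) ∧ IsUnit (g x₀)
  · exfalso
    obtain ⟨x₀, hx₀, hfx₀, hgx₀⟩ := hA
    -- get two more elements
    have hy : (S \ {x₀}).Nonempty := by
      rw [Set.nonempty_iff_ne_empty]
      intro hemp
      have hsub : S ⊆ {x₀} := fun a ha => by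
        by_contra hna; exact (Set.eq_empty_iff_forall_notMem.mp hemp a) ⟨ha, hna⟩
      have := Set.ncard_le_ncard hsub (Set.toFinite _)
      rw [Set.ncard_singleton] at this
      omega
    obtain ⟨y, hyS, hyne⟩ := hy
    simp only [Set.mem_singleton_iff] at hyne
    have hz : (S \ {x₀, y}).Nonempty := by
      rw [Set.nonempty_iff_ne_empty]
      intro hemp
      have hsub : S ⊆ {x₀, y} := fun a ha => by
        by_contra hna; exact (Set.eq_empty_iff_forall_notMem.mp hemp a) ⟨ha, hna⟩
      have := Set.ncard_le_ncard hsub (Set.toFinite _)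
      have h2' : ({x₀, y} : Set (R × R)).ncard ≤ 2 := by
        apply le_trans (Set.ncard_insert_le _ _); simp
      omega
    obtain ⟨z, hzS, hzne⟩ := hz
    simp only [Set.mem_insert_iff, Set.mem_singleton_iff, not_or] at hzne
    -- every other element has f a unit
    have hfu : ∀ w ∈ S, w ≠ x₀ → IsUnit (f w) := by
      intro w hw hwne
      by_contra hfw
      have e := horth' x₀ hx₀ w hw (fun h => hwne h.symm)
      have h1 : ¬ IsUnit (g x₀ * f w) := fun h => hfw (isUnit_of_mul_isUnit_right h)
      have h2' : f x₀ * g w = -(g x₀ * f w) := by linear_combination e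
      have h3' : ¬ IsUnit (f x₀ * g w) := by
        rw [h2']; intro h; exact h1 (by simpa using h.neg)
      have h4 : ¬ IsUnit (g w) := fun h => h3' (hfx₀.mul h)
      rcases huw w hw with h | h
      · exact hfw h
      · exact h4 h
    have hfy := hfu y hyS hyne
    have hfz := hfu z hzS hzne.1
    have e1 := horth' x₀ hx₀ y hyS (fun h => hyne h.symm)
    have e2 := horth' x₀ hx₀ z hzS (fun h => hzne.1 h.symm)
    have e3 := horth' y hyS z hzS (fun h => hzne.2 h.symm)
    have key : f x₀ * (2 * (g x₀ * (f y * f z))) = 0 := by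
      linear_combination f x₀ * f z * e1 + f x₀ * f y * e2 - (f x₀ * f x₀) * e3
        + (f x₀ * g z - g x₀ * f z) * e2 - (f x₀ * g z - g x₀ * f z) * e2
    have hu : IsUnit (f x₀ * (2 * (g x₀ * (f y * f z)))) :=
      hfx₀.mul (h2.mul (hgx₀.mul (hfy.mul hfz)))
    rw [key] at hu
    exact not_isUnit_zero hu
  -- Case B: every element has exactly one of f, g a unit
  push_neg at hA
  by_cases hB : ∀ x ∈ S, IsUnit (f x)
  · exact stmt6_helper h2 S f g hsep horth' hB hle
  · push_neg at hB
    obtain ⟨x, hx, hfx⟩ := hB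
    have hgx : IsUnit (g x) := (huw x hx).resolve_left hfx
    have hallg : ∀ y ∈ S, IsUnit (g y) := by
      intro y hy
      by_cases hxy : y = x
      · exact hxy ▸ hgx
      rcases huw y hy with hfy | hgy
      · -- mixed case: contradiction
        exfalso
        have hgy : ¬ IsUnit (g y) := fun h => hA y hy hfy h
        have e := horth' x hx y hy (fun h => hxy h.symm)
        have h1 : ¬ IsUnit (f x * g y) := fun h => hfx (isUnit_of_mul_isUnit_left h)
        have h2' : f x * g y = -(g x * f y) := by linear_combination e
        rw [h2'] at h1
        exact h1 ((hgx.mul hfy).neg)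
      · exact hgy
    have horth'' : ∀ x ∈ S, ∀ y ∈ S, x ≠ y → g x * f y + f x * g y = 0 := by
      intro a ha b hb hne
      linear_combination horth' a ha b hb hne
    exact stmt6_helper h2 S g f (fun a b h1 h2' => hsep a b h2' h1) horth'' hallg hle
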